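/- arXiv:1006.4050 — 8 statements merged into one kernel-verified Lean document; each statement's English description precedes it below -/
import Mathlib

section
/- Let P = (p q; r s) and A = (a b; c d) be 2×2 nonnegative matrices with positive determinants, with p, q > 0. Write u = r/p, v = s/q for P, and u' = r'/p', v' = s'/q' for PA = (p' q'; r' s'). Then the interval [u', v'] is contained in the interval [u, v]. -/
open Matrix

/-- Nested-interval property for column slopes: right multiplication by a nonnegative matrix
with positive determinant shrinks the slope interval. -/
theorem stmt5 (P A : Matrix (Fin 2) (Fin 2) ℝ) (hP : ∀ i j, 0 ≤ P i j) (hPdet : 0 < P.det)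
    (hp : 0 < P 0 0) (hq : 0 < P 0 1) (hA : ∀ i j, 0 ≤ A i j) (hAdet : 0 < A.det) :
    Set.Icc ((P * A) 1 0 / (P * A) 0 0) ((P * A) 1 1 / (P * A) 0 1) ⊆
      Set.Icc (P 1 0 / P 0 0) (P 1 1 / P 0 1) := by
  rw [Matrix.det_fin_two] at hPdet hAdet
  have ha : 0 < A 0 0 := by nlinarith [hA 0 1, hA 1 0, hA 1 1]
  have hd : 0 < A 1 1 := by nlinarith [hA 0 1, hA 1 0, hA 0 0]
  have hmul : ∀ i j : Fin 2, (P * A) i j = P i 0 * A 0 j + P i 1 * A 1 j := by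
    intro i j
    simp [Matrix.mul_apply, Fin.sum_univ_two]
  have hp' : 0 < (P * A) 0 0 := by
    rw [hmul]; nlinarith [hA 1 0, hP 0 1]
  have hq' : 0 < (P * A) 0 1 := by
    rw [hmul]; nlinarith [hA 0 1, hP 0 0]
  apply Set.Icc_subset_Icc
  · rw [div_le_div_iff₀ hp hp', hmul, hmul]
    nlinarith [hA 1 0, hP 1 0, hP 1 1]
  · rw [div_le_div_iff₀ hq' hq, hmul, hmul]
    nlinarith [hA 0 1, hP 1 0, hP 1 1]
end

section
/- Let P = (p q; r s) and A = (a b; c d) be 2×2 nonnegative matrices with positive determinants, with p, q > 0. Set α = (1 + (c/a)·(q/p))⁻¹, β = (1 + (b/d)·(p/q))⁻¹, γ = 1 − (c/a)(b/d). Then α, β, γ ∈ (0, 1], and with PA = (p' q'; r' s'), the interval lengths satisfy s'/q' − r'/p' = αβγ·(s/q − r/p). -/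
open Matrix

/-- The contraction identity for the slope-interval length under right multiplication:
`|I(PA)| = α β γ |I(P)|` with `α, β, γ ∈ (0, 1]`. -/
theorem stmt6 (P A : Matrix (Fin 2) (Fin 2) ℝ) (hP : ∀ i j, 0 ≤ P i j) (hPdet : 0 < P.det)
    (hp : 0 < P 0 0) (hq : 0 < P 0 1) (hA : ∀ i j, 0 ≤ A i j) (hAdet : 0 < A.det) :
    (1 + (A 1 0 / A 0 0) * (P 0 1 / P 0 0))⁻¹ ∈ Set.Ioc (0 : ℝ) 1 ∧
    (1 + (A 0 1 / A 1 1) * (P 0 0 / P 0 1))⁻¹ ∈ Set.Ioc (0 : ℝ) 1 ∧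
    (1 - (A 1 0 / A 0 0) * (A 0 1 / A 1 1)) ∈ Set.Ioc (0 : ℝ) 1 ∧
    (P * A) 1 1 / (P * A) 0 1 - (P * A) 1 0 / (P * A) 0 0 =
      (1 + (A 1 0 / A 0 0) * (P 0 1 / P 0 0))⁻¹ *
      (1 + (A 0 1 / A 1 1) * (P 0 0 / P 0 1))⁻¹ *
      (1 - (A 1 0 / A 0 0) * (A 0 1 / A 1 1)) *
      (P 1 1 / P 0 1 - P 1 0 / P 0 0) := by
  set a := A 0 0; set b := A 0 1; set c := A 1 0; set d := A 1 1
  set p := P 0 0; set q := P 0 1; set r := P 1 0; set s := P 1 1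
  have hAdet' : 0 < a * d - b * c := by rwa [Matrix.det_fin_two] at hAdet
  have hPdet' : 0 < p * s - q * r := by rwa [Matrix.det_fin_two] at hPdet
  have hb : 0 ≤ b := hA 0 1
  have hc : 0 ≤ c := hA 1 0
  have had : 0 < a * d := lt_of_lt_of_le hAdet' (by nlinarith [mul_nonneg hb hc])
  have ha : 0 < a := by
    rcases (hA 0 0).lt_or_eq with h | h
    · exact h
    · have h' : a = 0 := h.symm
      rw [h', zero_mul] at had; exact absurd had (lt_irrefl 0)
  have hd : 0 < d := by
    rcases (hA 1 1).lt_or_eq with h | h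
    · exact h
    · have h' : d = 0 := h.symm
      rw [h', mul_zero] at had; exact absurd had (lt_irrefl 0)
  have hα : (0:ℝ) < 1 + c / a * (q / p) := by positivity
  have hβ : (0:ℝ) < 1 + b / d * (p / q) := by
    have : (0:ℝ) ≤ b / d * (p / q) := by positivity
    linarith
  have hα1 : (1:ℝ) ≤ 1 + c / a * (q / p) := by
    have : (0:ℝ) ≤ c / a * (q / p) := by positivity
    linarith
  have hβ1 : (1:ℝ) ≤ 1 + b / d * (p / q) := by
    have : (0:ℝ) ≤ b / d * (p / q) := by positivity
    linarith
  refine ⟨⟨inv_pos.mpr hα, inv_le_one_of_one_le₀ hα1⟩,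
    ⟨inv_pos.mpr hβ, inv_le_one_of_one_le₀ hβ1⟩,
    ⟨?_, by nlinarith [div_nonneg hc ha.le, div_nonneg hb hd.le]⟩, ?_⟩
  · have : c / a * (b / d) < 1 := by
      rw [div_mul_div_comm, div_lt_one had]; nlinarith
    linarith
  · have h00 : (P * A) 0 0 = p * a + q * c := by
      simp [Matrix.mul_apply, Fin.sum_univ_two]; rfl
    have h01 : (P * A) 0 1 = p * b + q * d := by
      simp [Matrix.mul_apply, Fin.sum_univ_two]; rfl
    have h10 : (P * A) 1 0 = r * a + s * c := by
      simp [Matrix.mul_apply, Fin.sum_univ_two]; rfl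
    have h11 : (P * A) 1 1 = r * b + s * d := by
      simp [Matrix.mul_apply, Fin.sum_univ_two]; rfl
    have hqc : 0 ≤ q * c := mul_nonneg hq.le hc
    have hpb : 0 ≤ p * b := mul_nonneg hp.le hb
    have hpa : 0 < p * a + q * c := by positivity
    have hqd : 0 < p * b + q * d := by positivity
    rw [h00, h01, h10, h11]
    field_simp
    ring
end

section
/- Let (Aₙ)ₙ≥1 be a sequence of 2×2 nonnegative matrices with positive determinant, each taken from a fixed finite set, and write A₁⋯Aₙ = (pₙ qₙ; rₙ sₙ), assuming p₁, q₁ > 0. If the sequence of interval lengths |Iₙ| = sₙ/qₙ − rₙ/pₙ converges to 0, then for every nonnegative vector V with (A₁⋯Aₙ)V ≠ 0 for all n, the sequence of ratios ((A₁⋯Aₙ)V)₂ / ((A₁⋯Aₙ)V)₁ converges in [0, ∞). -/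
open Matrix Filter Topology

private lemma mediant_bounds9 {p q r s a c : ℝ} (hp : 0 < p) (hq : 0 < q) (ha : 0 ≤ a)
    (hc : 0 ≤ c) (hdet : r * q ≤ s * p) (hden : 0 < p * a + q * c) :
    r / p ≤ (r * a + s * c) / (p * a + q * c) ∧ (r * a + s * c) / (p * a + q * c) ≤ s / q := by
  constructor
  · rw [div_le_div_iff₀ hp hden]; nlinarith
  · rw [div_le_div_iff₀ hden hq]; nlinarith

/-- If the slope-interval lengths of the partial products `A₁⋯Aₙ` tend to `0`, then for every
nonnegative vector `V` with `(A₁⋯Aₙ)V ≠ 0` for all `n`, the ratio of the coordinates of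
`(A₁⋯Aₙ)V` converges in `[0,∞)`. -/
theorem stmt9 (A : ℕ → Matrix (Fin 2) (Fin 2) ℝ) (S : Finset (Matrix (Fin 2) (Fin 2) ℝ))
    (hS : ∀ n, A n ∈ S) (hA : ∀ n i j, 0 ≤ A n i j) (hdet : ∀ n, 0 < (A n).det)
    (Y : ℕ → Matrix (Fin 2) (Fin 2) ℝ)
    (hY : ∀ n, Y n = ((List.range n).map (fun i => A (i + 1))).prod)
    (hp1 : 0 < Y 1 0 0) (hq1 : 0 < Y 1 0 1)
    (hI : Tendsto (fun n => Y n 1 1 / Y n 0 1 - Y n 1 0 / Y n 0 0) atTop (nhds 0))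
    (V : Fin 2 → ℝ) (hV : ∀ i, 0 ≤ V i) (hYV : ∀ n, (Y n).mulVec V ≠ 0) :
    ∃ L : ℝ, 0 ≤ L ∧
      Tendsto (fun n => (Y n).mulVec V 1 / (Y n).mulVec V 0) atTop (nhds L) := by
  -- recursion for Y
  have hY0 : Y 0 = 1 := by rw [hY]; simp
  have hstep : ∀ n, Y (n + 1) = Y n * A (n + 1) := by
    intro n
    rw [hY, hY, List.range_succ, List.map_append, List.prod_append]
    simp
  -- entries of Y are nonnegative
  have hnn : ∀ n i j, 0 ≤ Y n i j := by
    intro n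
    induction n with
    | zero =>
      intro i j; rw [hY0, Matrix.one_apply]
      split <;> norm_num
    | succ n ih =>
      intro i j
      rw [hstep, Matrix.mul_apply]
      exact Finset.sum_nonneg fun k _ => mul_nonneg (ih i k) (hA _ k j)
  -- diagonal entries of A are positive
  have hdiag : ∀ n, 0 < A n 0 0 ∧ 0 < A n 1 1 := by
    intro n
    have hd := hdet n
    rw [Matrix.det_fin_two] at hd
    have h1 : 0 < A n 0 0 * A n 1 1 := by nlinarith [mul_nonneg (hA n 0 1) (hA n 1 0)]
    rcases mul_pos_iff.mp h1 with ⟨h2, h3⟩ | ⟨h2, h3⟩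
    · exact ⟨h2, h3⟩
    · linarith [hA n 0 0]
  -- entrywise recursion
  have hent : ∀ n i j,
      Y (n + 1) i j = Y n i 0 * A (n + 1) 0 j + Y n i 1 * A (n + 1) 1 j := by
    intro n i j
    rw [hstep, Matrix.mul_apply, Fin.sum_univ_two]
  -- positivity of top row of Y (n+1)
  have hpq : ∀ n, 0 < Y (n + 1) 0 0 ∧ 0 < Y (n + 1) 0 1 := by
    intro n
    induction n with
    | zero => exact ⟨hp1, hq1⟩
    | succ n ih =>
      constructor
      · rw [hent]
        have := mul_nonneg ih.2.le (hA (n + 2) 1 0)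
        nlinarith [mul_pos ih.1 (hdiag (n + 2)).1]
      · rw [hent]
        have := mul_nonneg ih.1.le (hA (n + 2) 0 1)
        nlinarith [mul_pos ih.2 (hdiag (n + 2)).2]
  -- determinant of Y is positive
  have hdetY : ∀ n, 0 < (Y n).det := by
    intro n
    induction n with
    | zero => rw [hY0]; simp
    | succ n ih =>
      rw [hstep, Matrix.det_mul]
      exact mul_pos ih (hdet (n + 1))
  have hrqsp : ∀ n, Y n 1 0 * Y n 0 1 ≤ Y n 1 1 * Y n 0 0 := by
    intro n
    have := hdetY n
    rw [Matrix.det_fin_two] at this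
    nlinarith
  -- V is a nonzero nonnegative vector
  have hVne : V ≠ 0 := by
    intro h
    apply hYV 0
    rw [h, Matrix.mulVec_zero]
  have hVpos : 0 < V 0 ∨ 0 < V 1 := by
    rcases (hV 0).lt_or_eq with h | h
    · exact Or.inl h
    rcases (hV 1).lt_or_eq with h' | h'
    · exact Or.inr h'
    exact absurd (funext fun i => by fin_cases i <;> simp [← h, ← h']) hVne
  -- the ratio sequences
  set u : ℕ → ℝ := fun n => Y (n + 1) 1 0 / Y (n + 1) 0 0 with hu_def
  set v : ℕ → ℝ := fun n => Y (n + 1) 1 1 / Y (n + 1) 0 1 with hv_def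
  set f : ℕ → ℝ := fun n => (Y (n + 1)).mulVec V 1 / (Y (n + 1)).mulVec V 0 with hf_def
  have hmono : ∀ n, u n ≤ u (n + 1) ∧ u (n + 1) ≤ v n ∧ u n ≤ v (n + 1) ∧ v (n + 1) ≤ v n := by
    intro n
    obtain ⟨hp, hq⟩ := hpq n
    obtain ⟨hp', hq'⟩ := hpq (n + 1)
    have hden1 : 0 < Y (n + 1) 0 0 * A (n + 2) 0 0 + Y (n + 1) 0 1 * A (n + 2) 1 0 := by
      rw [← hent]; exact hp'
    have hden2 : 0 < Y (n + 1) 0 0 * A (n + 2) 0 1 + Y (n + 1) 0 1 * A (n + 2) 1 1 := by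
      rw [← hent]; exact hq'
    have h1 := mediant_bounds9 hp hq (hA (n + 2) 0 0) (hA (n + 2) 1 0) (hrqsp (n + 1)) hden1
    have h2 := mediant_bounds9 hp hq (hA (n + 2) 0 1) (hA (n + 2) 1 1) (hrqsp (n + 1)) hden2
    refine ⟨?_, ?_, ?_, ?_⟩
    · simpa only [hu_def, hent (n + 1)] using h1.1
    · simpa only [hu_def, hv_def, hent (n + 1)] using h1.2
    · simpa only [hu_def, hv_def, hent (n + 1)] using h2.1
    · simpa only [hv_def, hent (n + 1)] using h2.2
  have huv : ∀ n, u n ≤ v n := by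
    intro n
    obtain ⟨hp, hq⟩ := hpq n
    rw [hu_def, hv_def, div_le_div_iff₀ hp hq]
    exact hrqsp (n + 1)
  have humono : Monotone u := monotone_nat_of_le_succ fun n => (hmono n).1
  have hvanti : Antitone v := antitone_nat_of_succ_le fun n => (hmono n).2.2.2
  -- f n lies between u n and v n
  have hmv : ∀ n i, (Y n).mulVec V i = Y n i 0 * V 0 + Y n i 1 * V 1 := by
    intro n i
    simp [Matrix.mulVec, dotProduct, Fin.sum_univ_two]
  have hfb : ∀ n, u n ≤ f n ∧ f n ≤ v n := by
    intro n
    obtain ⟨hp, hq⟩ := hpq n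
    have hden : 0 < Y (n + 1) 0 0 * V 0 + Y (n + 1) 0 1 * V 1 := by
      rcases hVpos with h | h
      · nlinarith [mul_nonneg hq.le (hV 1)]
      · nlinarith [mul_nonneg hp.le (hV 0)]
    have h := mediant_bounds9 hp hq (hV 0) (hV 1) (hrqsp (n + 1)) hden
    constructor
    · simpa only [hf_def, hu_def, hmv] using h.1
    · simpa only [hf_def, hv_def, hmv] using h.2
  -- convergence of u
  have hbdd : BddAbove (Set.range u) := by
    refine ⟨v 0, ?_⟩
    rintro x ⟨n, rfl⟩
    exact (huv n).trans (hvanti (Nat.zero_le n))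
  have hu : Tendsto u atTop (nhds (⨆ n, u n)) := tendsto_atTop_ciSup humono hbdd
  set L := ⨆ n, u n with hL
  have hL0 : 0 ≤ L := by
    have h0 : 0 ≤ u 0 := div_nonneg (hnn 1 1 0) (hpq 0).1.le
    exact h0.trans (le_ciSup hbdd 0)
  -- v n - u n → 0 (shifted version of hI)
  have hI' : Tendsto (fun n => v n - u n) atTop (nhds 0) := by
    have := hI.comp (tendsto_add_atTop_nat 1)
    simpa [Function.comp_def, hu_def, hv_def] using this
  have hv : Tendsto v atTop (nhds L) := by
    have := hI'.add hu
    simp only [zero_add] at this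
    convert this using 1
    funext n; ring
  have hf : Tendsto f atTop (nhds L) :=
    tendsto_of_tendsto_of_tendsto_of_le_of_le hu hv (fun n => (hfb n).1) (fun n => (hfb n).2)
  refine ⟨L, hL0, ?_⟩
  exact (tendsto_add_atTop_iff_nat 1).mp hf
end

section
/- Let (Aₙ)ₙ≥1 be 2×2 nonnegative matrices with positive determinant with p₁, q₁ > 0, where A₁⋯Aₙ = (pₙ qₙ; rₙ sₙ). Then the sequences uₙ = rₙ/pₙ and vₙ = sₙ/qₙ both converge in ℝ, with uₙ nondecreasing, vₙ nonincreasing, and uₙ < vₙ for all n. -/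
open Matrix Filter Topology

lemma stmt10_mulE (B C : Matrix (Fin 2) (Fin 2) ℝ) (i j : Fin 2) :
    (B * C) i j = B i 0 * C 0 j + B i 1 * C 1 j := by
  simp [Matrix.mul_apply, Fin.sum_univ_two]

/-- The slope sequences `uₙ = rₙ/pₙ` and `vₙ = sₙ/qₙ` of the partial products `A₁⋯Aₙ` are
respectively nondecreasing and nonincreasing, satisfy `uₙ < vₙ`, and both converge in `ℝ`. -/
theorem stmt10 (A : ℕ → Matrix (Fin 2) (Fin 2) ℝ)
    (hA : ∀ n i j, 0 ≤ A n i j) (hdet : ∀ n, 0 < (A n).det)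
    (Y : ℕ → Matrix (Fin 2) (Fin 2) ℝ)
    (hY : ∀ n, Y n = ((List.range n).map (fun i => A (i + 1))).prod)
    (hp1 : 0 < Y 1 0 0) (hq1 : 0 < Y 1 0 1) :
    (∀ n, 1 ≤ n → Y n 1 0 / Y n 0 0 ≤ Y (n + 1) 1 0 / Y (n + 1) 0 0) ∧
    (∀ n, 1 ≤ n → Y (n + 1) 1 1 / Y (n + 1) 0 1 ≤ Y n 1 1 / Y n 0 1) ∧
    (∀ n, 1 ≤ n → Y n 1 0 / Y n 0 0 < Y n 1 1 / Y n 0 1) ∧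
    (∃ Lu : ℝ, Tendsto (fun n => Y n 1 0 / Y n 0 0) atTop (nhds Lu)) ∧
    (∃ Lv : ℝ, Tendsto (fun n => Y n 1 1 / Y n 0 1) atTop (nhds Lv)) := by
  -- recursion for Y
  have hstep : ∀ n, Y (n + 1) = Y n * A (n + 1) := by
    intro n
    rw [hY, hY, List.range_succ, List.map_append, List.prod_append]
    simp
  -- positivity of diagonal of A
  have hAdiag : ∀ n, 0 < A n 0 0 ∧ 0 < A n 1 1 := by
    intro n
    have h := hdet n
    rw [Matrix.det_fin_two] at h
    have h1 := hA n 0 1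
    have h2 := hA n 1 0
    have h3 := hA n 0 0
    have h4 := hA n 1 1
    constructor <;> nlinarith
  -- key invariant
  have key : ∀ m : ℕ, 0 < Y (m + 1) 0 0 ∧ 0 < Y (m + 1) 0 1 ∧ 0 < (Y (m + 1)).det := by
    intro m
    induction m with
    | zero =>
      refine ⟨hp1, hq1, ?_⟩
      have : Y 1 = A 1 := by rw [hY 1, List.range_succ]; simp
      rw [this]; exact hdet 1
    | succ k ih =>
      obtain ⟨hp, hq, hd⟩ := ih
      have hs := hstep (k + 1)
      have ha := (hAdiag (k + 2)).1
      have hb := hA (k + 2) 0 1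
      have hc := hA (k + 2) 1 0
      have hd2 := (hAdiag (k + 2)).2
      refine ⟨?_, ?_, ?_⟩
      · rw [hs, stmt10_mulE]; positivity
      · rw [hs, stmt10_mulE]; positivity
      · rw [hs, Matrix.det_mul]
        exact mul_pos hd (hdet (k + 2))
  -- monotonicity of u
  have hu : ∀ m : ℕ, Y (m + 1) 1 0 / Y (m + 1) 0 0 ≤ Y (m + 2) 1 0 / Y (m + 2) 0 0 := by
    intro m
    obtain ⟨hp, hq, hd⟩ := key m
    obtain ⟨hp', -, -⟩ := key (m + 1)
    have hs := hstep (m + 1)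
    have hc := hA (m + 2) 1 0
    rw [Matrix.det_fin_two] at hd
    rw [div_le_div_iff₀ hp hp', hs, stmt10_mulE, stmt10_mulE]
    nlinarith
  -- antitonicity of v
  have hv : ∀ m : ℕ, Y (m + 2) 1 1 / Y (m + 2) 0 1 ≤ Y (m + 1) 1 1 / Y (m + 1) 0 1 := by
    intro m
    obtain ⟨hp, hq, hd⟩ := key m
    obtain ⟨-, hq', -⟩ := key (m + 1)
    have hs := hstep (m + 1)
    have hb := hA (m + 2) 0 1
    rw [Matrix.det_fin_two] at hd
    rw [div_le_div_iff₀ hq' hq, hs, stmt10_mulE, stmt10_mulE]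
    nlinarith
  -- u < v
  have hlt : ∀ m : ℕ, Y (m + 1) 1 0 / Y (m + 1) 0 0 < Y (m + 1) 1 1 / Y (m + 1) 0 1 := by
    intro m
    obtain ⟨hp, hq, hd⟩ := key m
    rw [Matrix.det_fin_two] at hd
    rw [div_lt_div_iff₀ hp hq]
    nlinarith
  -- shifted sequences
  set g : ℕ → ℝ := fun m => Y (m + 1) 1 0 / Y (m + 1) 0 0 with hg
  set h : ℕ → ℝ := fun m => Y (m + 1) 1 1 / Y (m + 1) 0 1 with hh
  have hgmono : Monotone g := monotone_nat_of_le_succ hu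
  have hhanti : Antitone h := antitone_nat_of_succ_le hv
  have hglth : ∀ m, g m < h m := hlt
  have hgbd : BddAbove (Set.range g) := by
    refine ⟨h 0, ?_⟩
    rintro x ⟨m, rfl⟩
    exact le_of_lt (lt_of_lt_of_le (hglth m) (hhanti (Nat.zero_le m)))
  have hhbd : BddBelow (Set.range h) := by
    refine ⟨g 0, ?_⟩
    rintro x ⟨m, rfl⟩
    exact le_of_lt (lt_of_le_of_lt (hgmono (Nat.zero_le m)) (hglth m))
  have hgconv : Tendsto g atTop (nhds (⨆ m, g m)) := tendsto_atTop_ciSup hgmono hgbd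
  have hhconv : Tendsto h atTop (nhds (⨅ m, h m)) := tendsto_atTop_ciInf hhanti hhbd
  refine ⟨?_, ?_, ?_, ?_, ?_⟩
  · intro n hn
    obtain ⟨m, rfl⟩ : ∃ m, n = m + 1 := ⟨n - 1, by omega⟩
    exact hu m
  · intro n hn
    obtain ⟨m, rfl⟩ : ∃ m, n = m + 1 := ⟨n - 1, by omega⟩
    exact hv m
  · intro n hn
    obtain ⟨m, rfl⟩ : ∃ m, n = m + 1 := ⟨n - 1, by omega⟩
    exact hlt m
  · exact ⟨_, (tendsto_add_atTop_iff_nat 1).mp hgconv⟩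
  · exact ⟨_, (tendsto_add_atTop_iff_nat 1).mp hhconv⟩
end

section
/- With the notation A₁⋯Aₙ = (pₙ qₙ; rₙ sₙ), each Aₙ = (aₙ bₙ; cₙ dₙ) a 2×2 nonnegative matrix with positive determinant, p₁, q₁ > 0, and wₙ = qₙ/pₙ, |Iₙ| = sₙ/qₙ − rₙ/pₙ: the limit limₙ |Iₙ| is positive if and only if the three series ∑ₙ (cₙ/aₙ)wₙ₋₁, ∑ₙ (bₙ/dₙ)(wₙ₋₁)⁻¹, and ∑ₙ (cₙ/aₙ)(bₙ/dₙ) all converge. -/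
open Matrix Filter Topology

lemma aux_log_le {u : ℝ} (hu : 0 ≤ u) : Real.log (1 + u) ≤ u := by
  have := Real.log_le_sub_one_of_pos (show (0:ℝ) < 1 + u by linarith)
  linarith

lemma aux_le_two_log {u : ℝ} (hu : 0 ≤ u) (hu1 : u ≤ 1) : u ≤ 2 * Real.log (1 + u) := by
  have h1 : (0:ℝ) < 1 + u := by linarith
  have h2 := Real.log_le_sub_one_of_pos (show (0:ℝ) < (1 + u)⁻¹ by positivity)
  rw [Real.log_inv] at h2
  have h3 : (1 + u)⁻¹ ≤ 1 - u / 2 := by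
    rw [inv_le_iff_one_le_mul₀ h1]  -- guess name
    nlinarith
  linarith

lemma aux_le_neg_log {z : ℝ} (h1 : z < 1) : z ≤ -Real.log (1 - z) := by
  have := Real.log_le_sub_one_of_pos (show (0:ℝ) < 1 - z by linarith)
  linarith

lemma aux_neg_log_le {z : ℝ} (h0 : 0 ≤ z) (h1 : z ≤ 1/2) : -Real.log (1 - z) ≤ 2 * z := by
  have hz : (0:ℝ) < 1 - z := by linarith
  have h2 := Real.log_le_sub_one_of_pos (show (0:ℝ) < (1 - z)⁻¹ by positivity)
  rw [Real.log_inv] at h2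
  have h3 : (1 - z)⁻¹ ≤ 1 + 2 * z := by
    rw [inv_le_iff_one_le_mul₀ hz]
    nlinarith
  linarith

lemma aux_summable_log_one_add {x : ℕ → ℝ} (hx : ∀ n, 0 ≤ x n) :
    Summable (fun n => Real.log (1 + x n)) ↔ Summable x := by
  constructor
  · intro h
    have hx0 : Tendsto x atTop (nhds 0) := by
      have h1 : Tendsto (fun n => Real.log (1 + x n)) atTop (nhds 0) := h.tendsto_atTop_zero
      have h2 : Tendsto (fun n => Real.exp (Real.log (1 + x n)) - 1) atTop (nhds 0) := by
        have := (Real.continuous_exp.tendsto 0).comp h1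
        simpa using this.sub_const 1
      refine h2.congr (fun n => ?_)
      rw [Real.exp_log (by linarith [hx n])]
      ring
    have hev : ∀ᶠ n in atTop, x n ≤ 1 := by
      filter_upwards [hx0.eventually (eventually_le_nhds (by norm_num : (0:ℝ) < 1))] with n hn
      exact hn
    obtain ⟨N, hN⟩ := eventually_atTop.mp hev
    rw [← summable_nat_add_iff N]
    rw [← summable_nat_add_iff N] at h
    have := h.mul_left 2
    refine this.of_nonneg_of_le (fun n => hx _) (fun n => ?_)
    exact aux_le_two_log (hx _) (hN _ (Nat.le_add_left N n))
  · intro h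
    refine h.of_nonneg_of_le (fun n => Real.log_nonneg (by linarith [hx n])) (fun n => aux_log_le (hx n))

lemma aux_summable_neg_log_one_sub {z : ℕ → ℝ} (h0 : ∀ n, 0 ≤ z n) (h1 : ∀ n, z n < 1) :
    Summable (fun n => -Real.log (1 - z n)) ↔ Summable z := by
  constructor
  · intro h
    exact h.of_nonneg_of_le h0 (fun n => aux_le_neg_log (h1 n))
  · intro h
    have hz0 : Tendsto z atTop (nhds 0) := h.tendsto_atTop_zero
    have hev : ∀ᶠ n in atTop, z n ≤ 1/2 := hz0.eventually (eventually_le_nhds (by norm_num))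
    obtain ⟨N, hN⟩ := eventually_atTop.mp hev
    rw [← summable_nat_add_iff N]
    rw [← summable_nat_add_iff N] at h
    have := h.mul_left 2
    refine this.of_nonneg_of_le (fun n => ?_) (fun n => aux_neg_log_le (h0 _) (hN _ (Nat.le_add_left N n)))
    have := Real.log_nonpos_iff (show (0:ℝ) ≤ 1 - z (n+N) by linarith [h1 (n+N)])
    simp only [neg_nonneg]
    exact (Real.log_nonpos_iff (by linarith [h1 (n+N)])).mpr (by linarith [h0 (n+N)])

lemma aux_summable_add3 {f g h : ℕ → ℝ} (hf : ∀ n, 0 ≤ f n) (hg : ∀ n, 0 ≤ g n)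
    (hh : ∀ n, 0 ≤ h n) :
    Summable (fun n => f n + g n + h n) ↔ Summable f ∧ Summable g ∧ Summable h := by
  constructor
  · intro H
    exact ⟨H.of_nonneg_of_le hf (fun n => by linarith [hg n, hh n]),
      H.of_nonneg_of_le hg (fun n => by linarith [hf n, hh n]),
      H.of_nonneg_of_le hh (fun n => by linarith [hf n, hg n])⟩
  · rintro ⟨h1, h2, h3⟩
    exact (h1.add h2).add h3

lemma aux_prod_limit {t : ℕ → ℝ} (h0 : ∀ n, 0 < t n) (h1 : ∀ n, t n ≤ 1) {c : ℝ} (hc : 0 < c) :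
    (∃ L : ℝ, 0 < L ∧
        Tendsto (fun m => c * ∏ j ∈ Finset.range m, t j) atTop (nhds L)) ↔
      Summable (fun j => -Real.log (t j)) := by
  have hprod : ∀ m, c * ∏ j ∈ Finset.range m, t j
      = Real.exp (Real.log c - ∑ j ∈ Finset.range m, -Real.log (t j)) := by
    intro m
    rw [Finset.sum_neg_distrib, sub_neg_eq_add, Real.exp_add, Real.exp_log hc,
      Real.exp_sum]
    congr 1
    exact Finset.prod_congr rfl (fun j _ => (Real.exp_log (h0 j)).symm)
  constructor
  · rintro ⟨L, hL, hT⟩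
    have hlog : Tendsto (fun m => Real.log (c * ∏ j ∈ Finset.range m, t j)) atTop
        (nhds (Real.log L)) := ((Real.continuousAt_log hL.ne').tendsto).comp hT
    have hsum : Tendsto (fun m => ∑ j ∈ Finset.range m, -Real.log (t j)) atTop
        (nhds (Real.log c - Real.log L)) := by
      have : ∀ m, ∑ j ∈ Finset.range m, -Real.log (t j)
          = Real.log c - Real.log (c * ∏ j ∈ Finset.range m, t j) := by
        intro m
        rw [hprod m, Real.log_exp]
        ring
      simpa only [this] using (tendsto_const_nhds.sub hlog)
    have hnn : ∀ j, 0 ≤ -Real.log (t j) := fun j => by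
      simp only [neg_nonneg]
      exact Real.log_nonpos (le_of_lt (h0 j)) (h1 j)
    have hmono : Monotone (fun m => ∑ j ∈ Finset.range m, -Real.log (t j)) := by
      intro a b hab
      exact Finset.sum_le_sum_of_subset_of_nonneg (Finset.range_subset_range.2 hab)
        (fun j _ _ => hnn j)
    refine summable_of_sum_range_le hnn (fun n => hmono.ge_of_tendsto hsum n)
  · intro h
    refine ⟨Real.exp (Real.log c - ∑' j, -Real.log (t j)), Real.exp_pos _, ?_⟩
    have h2 : Tendsto (fun m => Real.log c - ∑ j ∈ Finset.range m, -Real.log (t j)) atTop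
        (nhds (Real.log c - ∑' j, -Real.log (t j))) :=
      tendsto_const_nhds.sub h.hasSum.tendsto_sum_nat
    have := (Real.continuous_exp.tendsto _).comp h2
    exact this.congr (fun m => (hprod m).symm)
lemma aux_F {p q r s : ℝ} (hp : p ≠ 0) (hq : q ≠ 0) :
    s / q - r / p = (p * s - q * r) / (p * q) := by
  field_simp

lemma aux_rec {D p q a b c d : ℝ} (hp : p ≠ 0) (hq : q ≠ 0) (ha : a ≠ 0) (hd : d ≠ 0)
    (hpa : p * a + q * c ≠ 0) (hqd : p * b + q * d ≠ 0) :
    D * (a * d - b * c) / ((p * a + q * c) * (p * b + q * d)) =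
      D / (p * q) * ((1 - c / a * (b / d)) / ((1 + c / a * (q / p)) * (1 + b / d * (q / p)⁻¹))) := by
  have h1 : 1 + c / a * (q / p) = (p * a + q * c) / (a * p) := by field_simp
  have h2 : 1 + b / d * (q / p)⁻¹ = (p * b + q * d) / (d * q) := by
    rw [inv_div]
    field_simp
    ring
  have h3 : 1 - c / a * (b / d) = (a * d - b * c) / (a * d) := by field_simp
  rw [h1, h2, h3]
  field_simp

/-- The limit of the slope-interval lengths `|Iₙ| = sₙ/qₙ − rₙ/pₙ` is positive if and only if
the three series `∑ (cₙ/aₙ) wₙ₋₁`, `∑ (bₙ/dₙ) wₙ₋₁⁻¹` and `∑ (cₙ/aₙ)(bₙ/dₙ)` converge. -/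
theorem stmt12 (A : ℕ → Matrix (Fin 2) (Fin 2) ℝ)
    (hA : ∀ n i j, 0 ≤ A n i j) (hdet : ∀ n, 0 < (A n).det)
    (Y : ℕ → Matrix (Fin 2) (Fin 2) ℝ)
    (hY : ∀ n, Y n = ((List.range n).map (fun i => A (i + 1))).prod)
    (hp1 : 0 < Y 1 0 0) (hq1 : 0 < Y 1 0 1) :
    (∃ L : ℝ, 0 < L ∧
        Tendsto (fun n => Y n 1 1 / Y n 0 1 - Y n 1 0 / Y n 0 0) atTop (nhds L)) ↔
      (Summable (fun n => (A (n + 2) 1 0 / A (n + 2) 0 0) * (Y (n + 1) 0 1 / Y (n + 1) 0 0)) ∧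
       Summable (fun n => (A (n + 2) 0 1 / A (n + 2) 1 1) * (Y (n + 1) 0 1 / Y (n + 1) 0 0)⁻¹) ∧
       Summable (fun n => (A (n + 2) 1 0 / A (n + 2) 0 0) * (A (n + 2) 0 1 / A (n + 2) 1 1))) := by
  -- basic structure of Y
  have hY0 : Y 0 = 1 := by rw [hY]; simp
  have hYsucc : ∀ n, Y (n + 1) = Y n * A (n + 1) := by
    intro n
    rw [hY, hY, List.range_succ, List.map_append, List.prod_append]
    simp
  -- diagonal entries of A are positive
  have ha : ∀ n, 0 < A n 0 0 := by
    intro n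
    have hd := hdet n
    rw [Matrix.det_fin_two] at hd
    nlinarith [hA n 0 0, hA n 1 1, hA n 0 1, hA n 1 0, mul_nonneg (hA n 0 1) (hA n 1 0)]
  have hd : ∀ n, 0 < A n 1 1 := by
    intro n
    have hd := hdet n
    rw [Matrix.det_fin_two] at hd
    nlinarith [hA n 0 0, hA n 1 1, hA n 0 1, hA n 1 0, mul_nonneg (hA n 0 1) (hA n 1 0)]
  -- entries of Y are nonnegative
  have hYnn : ∀ n i j, 0 ≤ Y n i j := by
    intro n
    induction n with
    | zero =>
      intro i j; rw [hY0]
      fin_cases i <;> fin_cases j <;> simp [Matrix.one_apply]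
    | succ n ih =>
      intro i j
      rw [hYsucc, Matrix.mul_apply, Fin.sum_univ_two]
      exact add_nonneg (mul_nonneg (ih i 0) (hA _ 0 j)) (mul_nonneg (ih i 1) (hA _ 1 j))
  -- first row entries are positive
  have hpq : ∀ n, 0 < Y (n + 1) 0 0 ∧ 0 < Y (n + 1) 0 1 := by
    intro n
    induction n with
    | zero => exact ⟨hp1, hq1⟩
    | succ n ih =>
      rw [hYsucc (n + 1)]
      constructor <;> rw [Matrix.mul_apply, Fin.sum_univ_two]
      · nlinarith [mul_pos ih.1 (ha (n + 2)), mul_nonneg (hYnn (n + 1) 0 1) (hA (n + 2) 1 0)]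
      · nlinarith [mul_pos ih.2 (hd (n + 2)), mul_nonneg (hYnn (n + 1) 0 0) (hA (n + 2) 0 1)]
  -- determinants of Y are positive
  have hYdet : ∀ n, 0 < (Y n).det := by
    intro n
    induction n with
    | zero => rw [hY0]; simp
    | succ n ih => rw [hYsucc, Matrix.det_mul]; exact mul_pos ih (hdet (n + 1))
  set F : ℕ → ℝ := fun n => Y n 1 1 / Y n 0 1 - Y n 1 0 / Y n 0 0 with hFdef
  set x : ℕ → ℝ := fun n => (A (n + 2) 1 0 / A (n + 2) 0 0) * (Y (n + 1) 0 1 / Y (n + 1) 0 0)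
    with hxdef
  set y : ℕ → ℝ := fun n => (A (n + 2) 0 1 / A (n + 2) 1 1) * (Y (n + 1) 0 1 / Y (n + 1) 0 0)⁻¹
    with hydef
  set z : ℕ → ℝ := fun n => (A (n + 2) 1 0 / A (n + 2) 0 0) * (A (n + 2) 0 1 / A (n + 2) 1 1)
    with hzdef
  set t : ℕ → ℝ := fun n => (1 - z n) / ((1 + x n) * (1 + y n)) with htdef
  have hxnn : ∀ n, 0 ≤ x n := fun n =>
    mul_nonneg (div_nonneg (hA _ 1 0) (hA _ 0 0)) (div_nonneg (hYnn _ 0 1) (hYnn _ 0 0))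
  have hynn : ∀ n, 0 ≤ y n := fun n =>
    mul_nonneg (div_nonneg (hA _ 0 1) (hA _ 1 1))
      (inv_nonneg.mpr (div_nonneg (hYnn _ 0 1) (hYnn _ 0 0)))
  have hznn : ∀ n, 0 ≤ z n := fun n =>
    mul_nonneg (div_nonneg (hA _ 1 0) (hA _ 0 0)) (div_nonneg (hA _ 0 1) (hA _ 1 1))
  have hz1 : ∀ n, z n < 1 := by
    intro n
    have hdn := hdet (n + 2)
    rw [Matrix.det_fin_two] at hdn
    have had : 0 < A (n + 2) 0 0 * A (n + 2) 1 1 := mul_pos (ha _) (hd _)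
    have : z n = (A (n + 2) 1 0 * A (n + 2) 0 1) / (A (n + 2) 0 0 * A (n + 2) 1 1) := by
      simp only [hzdef]; rw [div_mul_div_comm]
    rw [this, div_lt_one had]
    nlinarith
  have ht0 : ∀ n, 0 < t n := by
    intro n
    have h1 : (0:ℝ) < 1 - z n := by linarith [hz1 n]
    have h2 : (0:ℝ) < (1 + x n) * (1 + y n) :=
      mul_pos (by linarith [hxnn n]) (by linarith [hynn n])
    exact div_pos h1 h2
  have ht1 : ∀ n, t n ≤ 1 := by
    intro n
    rw [htdef]
    rw [div_le_one (mul_pos (by linarith [hxnn n]) (by linarith [hynn n]))]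
    nlinarith [hxnn n, hynn n, hznn n, mul_nonneg (hxnn n) (hynn n)]
  -- expression of F via determinant
  have hF : ∀ n, F (n + 1) = (Y (n + 1)).det / (Y (n + 1) 0 0 * Y (n + 1) 0 1) := by
    intro n
    have hp := (hpq n).1
    have hq := (hpq n).2
    simp only [hFdef, Matrix.det_fin_two]
    exact aux_F hp.ne' hq.ne'
  have hF1 : 0 < F 1 := by
    have := hF 0
    rw [this]
    exact div_pos (hYdet 1) (mul_pos (hpq 0).1 (hpq 0).2)
  -- the recursion
  have hrec : ∀ n, F (n + 2) = F (n + 1) * t n := by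
    intro n
    have hp := (hpq n).1
    have hq := (hpq n).2
    have hp2 : Y (n + 2) 0 0 = Y (n + 1) 0 0 * A (n + 2) 0 0 + Y (n + 1) 0 1 * A (n + 2) 1 0 := by
      rw [hYsucc (n + 1), Matrix.mul_apply, Fin.sum_univ_two]
    have hq2 : Y (n + 2) 0 1 = Y (n + 1) 0 0 * A (n + 2) 0 1 + Y (n + 1) 0 1 * A (n + 2) 1 1 := by
      rw [hYsucc (n + 1), Matrix.mul_apply, Fin.sum_univ_two]
    have hdet2 : (Y (n + 2)).det = (Y (n + 1)).det * (A (n + 2)).det := by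
      rw [hYsucc (n + 1), Matrix.det_mul]
    have e2 := hF (n + 1)
    have e1 := hF n
    have han := ha (n + 2)
    have hdn := hd (n + 2)
    have h1x : (0:ℝ) < 1 + x n := by linarith [hxnn n]
    have h1y : (0:ℝ) < 1 + y n := by linarith [hynn n]
    have hp2' : (0:ℝ) < Y (n + 1) 0 0 * A (n + 2) 0 0 + Y (n + 1) 0 1 * A (n + 2) 1 0 := by
      nlinarith [mul_pos hp han, mul_nonneg (hYnn (n + 1) 0 1) (hA (n + 2) 1 0)]
    have hq2' : (0:ℝ) < Y (n + 1) 0 0 * A (n + 2) 0 1 + Y (n + 1) 0 1 * A (n + 2) 1 1 := by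
      nlinarith [mul_pos hq hdn, mul_nonneg (hYnn (n + 1) 0 0) (hA (n + 2) 0 1)]
    rw [e2, e1, hp2, hq2, hdet2, Matrix.det_fin_two (A (n + 2))]
    simp only [htdef, hxdef, hydef, hzdef]
    exact aux_rec hp.ne' hq.ne' han.ne' hdn.ne' hp2'.ne' hq2'.ne'
  have hGrec : ∀ m, F (m + 1) = F 1 * ∏ j ∈ Finset.range m, t j := by
    intro m
    induction m with
    | zero => simp
    | succ m ih => rw [Finset.prod_range_succ, ← mul_assoc, ← ih]; exact hrec m
  have hlogt : ∀ n, -Real.log (t n)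
      = Real.log (1 + x n) + Real.log (1 + y n) + -Real.log (1 - z n) := by
    intro n
    have h1x : (0:ℝ) < 1 + x n := by linarith [hxnn n]
    have h1y : (0:ℝ) < 1 + y n := by linarith [hynn n]
    have h1z : (0:ℝ) < 1 - z n := by linarith [hz1 n]
    rw [htdef]
    rw [Real.log_div h1z.ne' (mul_pos h1x h1y).ne', Real.log_mul h1x.ne' h1y.ne']
    ring
  have key : (∃ L : ℝ, 0 < L ∧ Tendsto F atTop (nhds L)) ↔
      Summable (fun j => -Real.log (t j)) := by
    rw [← aux_prod_limit ht0 ht1 hF1]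
    apply exists_congr; intro L
    apply and_congr_right; intro hL
    rw [← tendsto_add_atTop_iff_nat 1]
    exact tendsto_congr fun m => hGrec m
  have key2 : Summable (fun j => -Real.log (t j)) ↔
      (Summable x ∧ Summable y ∧ Summable z) := by
    rw [summable_congr hlogt,
      aux_summable_add3 (fun n => Real.log_nonneg (by linarith [hxnn n]))
        (fun n => Real.log_nonneg (by linarith [hynn n]))
        (fun n => by simpa using (Real.log_nonpos (by linarith [hz1 n]) (by linarith [hznn n]))),
      aux_summable_log_one_add hxnn, aux_summable_log_one_add hynn,
      aux_summable_neg_log_one_sub hznn hz1]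
  exact key.trans key2
end

section
/- Let M_k = (a 0; 0 d) and M_ℓ = (α 0; 0 δ) be diagonal matrices with a > d > 0 and 0 < α < δ. Then there exists a sequence (ωₙ) with values in {k, ℓ} such that for every positive vector V = (v₁; v₂), the sequence of ratios (M_{ω₁}⋯M_{ωₙ}V)₂/(M_{ω₁}⋯M_{ωₙ}V)₁ diverges (does not converge in [0,∞]). -/
open Matrix Filter Topology

namespace Stmt16Aux

noncomputable def step (u w : ℝ) (st : ℝ × ℕ × Bool) : ℝ × ℕ × Bool :=
  if st.2.2 then
    if st.1 * u < ((st.2.1 : ℝ))⁻¹ then (st.1 * u, st.2.1, false)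
    else (st.1 * u, st.2.1, true)
  else
    if (st.2.1 : ℝ) < st.1 * w then (st.1 * w, st.2.1 + 1, true)
    else (st.1 * w, st.2.1, false)

noncomputable def SM (u w : ℝ) : ℕ → ℝ × ℕ × Bool
  | 0 => (1, 1, true)
  | n + 1 => step u w (SM u w n)

variable {u w : ℝ}

lemma S_succ (u w : ℝ) (n : ℕ) :
    (SM u w (n+1)).1 = (SM u w n).1 * (if (SM u w n).2.2 then u else w) := by
  simp only [SM, step]
  split_ifs <;> rfl

lemma m_succ_le (u w : ℝ) (n : ℕ) : (SM u w n).2.1 ≤ (SM u w (n+1)).2.1 := by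
  simp only [SM, step]
  split_ifs <;> simp

lemma m_mono (u w : ℝ) : Monotone (fun n => (SM u w n).2.1) :=
  monotone_nat_of_le_succ (m_succ_le u w)

lemma m_pos (u w : ℝ) (n : ℕ) : 1 ≤ (SM u w n).2.1 := by
  induction n with
  | zero => rfl
  | succ n ih => exact ih.trans (m_succ_le u w n)

lemma S_pos (hu0 : 0 < u) (hw0 : 0 < w) (n : ℕ) : 0 < (SM u w n).1 := by
  induction n with
  | zero => norm_num [SM]
  | succ n ih =>
    rw [S_succ]
    split_ifs <;> positivity

lemma step_down {n : ℕ} (h : (SM u w n).2.2 = true) :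
    SM u w (n+1) = if (SM u w n).1 * u < ((SM u w n).2.1 : ℝ)⁻¹
      then ((SM u w n).1 * u, (SM u w n).2.1, false)
      else ((SM u w n).1 * u, (SM u w n).2.1, true) := by
  simp only [SM, step, h]; rfl

lemma step_up {n : ℕ} (h : (SM u w n).2.2 = false) :
    SM u w (n+1) = if ((SM u w n).2.1 : ℝ) < (SM u w n).1 * w
      then ((SM u w n).1 * w, (SM u w n).2.1 + 1, true)
      else ((SM u w n).1 * w, (SM u w n).2.1, false) := by
  simp only [SM, step, h]; rfl

lemma down_chain {n : ℕ} (h : ∀ k, (SM u w (n+k)).2.2 = true) (k : ℕ) :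
    (SM u w (n+k)).1 = (SM u w n).1 * u ^ k ∧ (SM u w (n+k)).2.1 = (SM u w n).2.1 := by
  induction k with
  | zero => simp
  | succ k ih =>
    have hs := step_down (h k)
    rw [show n + (k+1) = (n+k) + 1 from rfl, hs]
    split_ifs with hc
    · exfalso
      have := h (k+1)
      rw [show n + (k+1) = (n+k) + 1 from rfl, hs, if_pos hc] at this
      simp at this
    · constructor
      · simp only [ih.1]; ring
      · exact ih.2

lemma up_chain {n : ℕ} (h : ∀ k, (SM u w (n+k)).2.2 = false) (k : ℕ) :
    (SM u w (n+k)).1 = (SM u w n).1 * w ^ k ∧ (SM u w (n+k)).2.1 = (SM u w n).2.1 := by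
  induction k with
  | zero => simp
  | succ k ih =>
    have hs := step_up (h k)
    rw [show n + (k+1) = (n+k) + 1 from rfl, hs]
    split_ifs with hc
    · exfalso
      have := h (k+1)
      rw [show n + (k+1) = (n+k) + 1 from rfl, hs, if_pos hc] at this
      simp at this
    · constructor
      · simp only [ih.1]; ring
      · exact ih.2

lemma down_exits (hu0 : 0 < u) (hu1 : u < 1) {n : ℕ}
    (h : (SM u w n).2.2 = true) : ∃ k, (SM u w (n+k)).2.2 = false := by
  by_contra hc
  push_neg at hc
  have hall : ∀ k, (SM u w (n+k)).2.2 = true := by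
    intro k; cases hk : (SM u w (n+k)).2.2
    · exact absurd hk (hc k)
    · rfl
  have hcond : ∀ k, ((SM u w n).2.1 : ℝ)⁻¹ ≤ (SM u w n).1 * u ^ (k+1) := by
    intro k
    have hs := step_down (hall k)
    have hnext := hall (k+1)
    rw [show n + (k+1) = (n+k) + 1 from rfl] at hnext
    rw [hs] at hnext
    by_cases hcc : (SM u w (n+k)).1 * u < ((SM u w (n+k)).2.1 : ℝ)⁻¹
    · rw [if_pos hcc] at hnext; simp at hnext
    · push_neg at hcc
      have h1 := (down_chain hall k).1
      have h2 := (down_chain hall k).2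
      rw [h1, h2] at hcc
      calc ((SM u w n).2.1 : ℝ)⁻¹ ≤ (SM u w n).1 * u ^ k * u := hcc
        _ = (SM u w n).1 * u ^ (k+1) := by ring
  have hlim : Tendsto (fun k => (SM u w n).1 * u ^ (k+1)) atTop (nhds 0) := by
    have h1 := tendsto_pow_atTop_nhds_zero_of_lt_one hu0.le hu1
    have h2 : Tendsto (fun k : ℕ => u ^ (k+1)) atTop (nhds 0) :=
      h1.comp (tendsto_add_atTop_nat 1)
    simpa using h2.const_mul ((SM u w n).1)
  have hpos : 0 < ((SM u w n).2.1 : ℝ)⁻¹ := by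
    have := m_pos u w n; positivity
  have := ge_of_tendsto hlim (Filter.Eventually.of_forall hcond)
  linarith

lemma up_exits (hu0 : 0 < u) (hw : 1 < w) {n : ℕ}
    (h : (SM u w n).2.2 = false) : ∃ k, (SM u w (n+k)).2.2 = true := by
  by_contra hc
  push_neg at hc
  have hall : ∀ k, (SM u w (n+k)).2.2 = false := by
    intro k; cases hk : (SM u w (n+k)).2.2
    · rfl
    · exact absurd hk (hc k)
  have hcond : ∀ k, (SM u w n).1 * w ^ (k+1) ≤ ((SM u w n).2.1 : ℝ) := by
    intro k
    have hs := step_up (hall k)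
    have hnext := hall (k+1)
    rw [show n + (k+1) = (n+k) + 1 from rfl] at hnext
    rw [hs] at hnext
    by_cases hcc : ((SM u w (n+k)).2.1 : ℝ) < (SM u w (n+k)).1 * w
    · rw [if_pos hcc] at hnext; simp at hnext
    · push_neg at hcc
      have h1 := (up_chain hall k).1
      have h2 := (up_chain hall k).2
      rw [h1, h2] at hcc
      calc (SM u w n).1 * w ^ (k+1) = (SM u w n).1 * w ^ k * w := by ring
        _ ≤ ((SM u w n).2.1 : ℝ) := hcc
  have hSpos : 0 < (SM u w n).1 := S_pos hu0 (by linarith) n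
  have hlim : Tendsto (fun k : ℕ => (SM u w n).1 * w ^ (k+1)) atTop atTop := by
    have h1 := tendsto_pow_atTop_atTop_of_one_lt hw (α := ℝ)
    exact (h1.comp (tendsto_add_atTop_nat 1)).const_mul_atTop hSpos
  obtain ⟨k, hk⟩ := (hlim.eventually_gt_atTop ((SM u w n).2.1 : ℝ)).exists
  exact absurd (hcond k) (not_le.mpr hk)

lemma exists_transition {n : ℕ} {b : Bool} (h : (SM u w n).2.2 = b)
    (hex : ∃ k, (SM u w (n+k)).2.2 ≠ b) :
    ∃ n' ≥ n, (SM u w n').2.2 = b ∧ (SM u w (n'+1)).2.2 ≠ b := by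
  classical
  set k := Nat.find hex with hkdef
  have hk := Nat.find_spec hex
  rw [← hkdef] at hk
  have hk0 : k ≠ 0 := by
    intro h0; rw [h0] at hk; simp only [Nat.add_zero] at hk; exact hk h
  obtain ⟨j, hj⟩ := Nat.exists_eq_succ_of_ne_zero hk0
  refine ⟨n + j, Nat.le_add_right n j, ?_, ?_⟩
  · have := Nat.find_min hex (m := j) (by omega)
    simpa using this
  · rw [show n + j + 1 = n + k by omega]; exact hk

lemma exists_down_completion (hu0 : 0 < u) (hu1 : u < 1) (hw : 1 < w) (N : ℕ) :
    ∃ n ≥ N, (SM u w n).2.2 = true ∧ (SM u w (n+1)).2.2 = false := by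
  cases h : (SM u w N).2.2 with
  | true =>
    obtain ⟨n', hn', h1, h2⟩ := exists_transition h
      (by simpa using down_exits hu0 hu1 h)
    exact ⟨n', hn', h1, by simpa using h2⟩
  | false =>
    obtain ⟨k, hk⟩ := up_exits hu0 hw h
    obtain ⟨n', hn', h1, h2⟩ := exists_transition hk
      (by simpa using down_exits hu0 hu1 hk)
    exact ⟨n', le_trans (Nat.le_add_right N k) hn', h1, by simpa using h2⟩

lemma exists_up_completion (hu0 : 0 < u) (hu1 : u < 1) (hw : 1 < w) (N : ℕ) :
    ∃ n ≥ N, (SM u w n).2.2 = false ∧ (SM u w (n+1)).2.2 = true := by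
  cases h : (SM u w N).2.2 with
  | false =>
    obtain ⟨n', hn', h1, h2⟩ := exists_transition h
      (by simpa using up_exits hu0 hw h)
    exact ⟨n', hn', h1, by simpa using h2⟩
  | true =>
    obtain ⟨k, hk⟩ := down_exits hu0 hu1 h
    obtain ⟨n', hn', h1, h2⟩ := exists_transition hk
      (by simpa using up_exits hu0 hw hk)
    exact ⟨n', le_trans (Nat.le_add_right N k) hn', h1, by simpa using h2⟩

lemma down_completion_val {n : ℕ} (h1 : (SM u w n).2.2 = true)
    (h2 : (SM u w (n+1)).2.2 = false) :
    (SM u w (n+1)).1 < ((SM u w n).2.1 : ℝ)⁻¹ := by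
  have hs := step_down h1
  by_cases hc : (SM u w n).1 * u < ((SM u w n).2.1 : ℝ)⁻¹
  · rw [hs, if_pos hc]; exact hc
  · rw [hs, if_neg hc] at h2; simp at h2

lemma up_completion_val {n : ℕ} (h1 : (SM u w n).2.2 = false)
    (h2 : (SM u w (n+1)).2.2 = true) :
    ((SM u w n).2.1 : ℝ) < (SM u w (n+1)).1 ∧ (SM u w (n+1)).2.1 = (SM u w n).2.1 + 1 := by
  have hs := step_up h1
  by_cases hc : ((SM u w n).2.1 : ℝ) < (SM u w n).1 * w
  · rw [hs, if_pos hc]; exact ⟨hc, rfl⟩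
  · rw [hs, if_neg hc] at h2; simp at h2

lemma m_unbounded (hu0 : 0 < u) (hu1 : u < 1) (hw : 1 < w) (j N : ℕ) :
    ∃ n ≥ N, j ≤ (SM u w n).2.1 := by
  induction j with
  | zero => exact ⟨N, le_refl N, Nat.zero_le _⟩
  | succ j ih =>
    obtain ⟨n, hn, hj⟩ := ih
    obtain ⟨n', hn', h1, h2⟩ := exists_up_completion hu0 hu1 hw n
    refine ⟨n' + 1, by omega, ?_⟩
    have hval := (up_completion_val h1 h2).2
    have hmono : (SM u w n).2.1 ≤ (SM u w n').2.1 := m_mono u w hn'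
    omega

lemma freq_small (hu0 : 0 < u) (hu1 : u < 1) (hw : 1 < w) {ε : ℝ} (hε : 0 < ε) (N : ℕ) :
    ∃ n ≥ N, (SM u w n).1 ≤ ε := by
  obtain ⟨j, hj⟩ := exists_nat_gt ε⁻¹
  obtain ⟨n0, hn0, hj0⟩ := m_unbounded hu0 hu1 hw j N
  obtain ⟨n', hn', h1, h2⟩ := exists_down_completion hu0 hu1 hw n0
  refine ⟨n' + 1, by omega, ?_⟩
  have hval := down_completion_val h1 h2
  have hmn : (j : ℝ) ≤ ((SM u w n').2.1 : ℝ) := by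
    have := hj0.trans (m_mono u w hn'); exact_mod_cast this
  have hjpos : (0:ℝ) < j := lt_of_lt_of_le (inv_pos.mpr hε) hj.le
  have hinv : ((SM u w n').2.1 : ℝ)⁻¹ ≤ (j : ℝ)⁻¹ := inv_anti₀ hjpos hmn
  have hje : (j : ℝ)⁻¹ < ε := by
    rw [inv_lt_comm₀ hjpos hε]; exact hj
  linarith

lemma freq_large (hu0 : 0 < u) (hu1 : u < 1) (hw : 1 < w) (M : ℝ) (N : ℕ) :
    ∃ n ≥ N, M ≤ (SM u w n).1 := by
  obtain ⟨j, hj⟩ := exists_nat_gt M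
  obtain ⟨n0, hn0, hj0⟩ := m_unbounded hu0 hu1 hw j N
  obtain ⟨n', hn', h1, h2⟩ := exists_up_completion hu0 hu1 hw n0
  refine ⟨n' + 1, by omega, ?_⟩
  have hval := (up_completion_val h1 h2).1
  have hmn : (j : ℝ) ≤ ((SM u w n').2.1 : ℝ) := by
    have hmono : (SM u w n0).2.1 ≤ (SM u w n').2.1 := m_mono u w hn'
    exact_mod_cast hj0.trans hmono
  linarith

end Stmt16Aux

/-- Given two diagonal matrices `M_k = diag(a,d)` with `a > d > 0` and `M_ℓ = diag(α,δ)` with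
`0 < α < δ`, there is a sequence of choices among them such that for every positive vector `V`
the normalized products `YₙV/‖YₙV‖` (sum norm) do not converge, i.e. the ratio sequence
diverges in `[0,∞]`. -/
theorem stmt16 (a d α δ : ℝ) (hd : 0 < d) (had : d < a) (hα : 0 < α) (hαδ : α < δ)
    (Mk Ml : Matrix (Fin 2) (Fin 2) ℝ) (hMk : Mk = !![a, 0; 0, d]) (hMl : Ml = !![α, 0; 0, δ]) :
    ∃ ω : ℕ → Matrix (Fin 2) (Fin 2) ℝ, (∀ n, ω n = Mk ∨ ω n = Ml) ∧
      ∀ V : Fin 2 → ℝ, 0 < V 0 → 0 < V 1 →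
        ¬ ∃ L : Fin 2 → ℝ,
          Tendsto (fun n =>
            (∑ i, (((List.range n).map ω).prod.mulVec V) i)⁻¹ •
              ((List.range n).map ω).prod.mulVec V) atTop (nhds L) := by
  have ha : 0 < a := hd.trans had
  set u := d / a with hu
  set w := δ / α with hwdef
  have hu0 : 0 < u := div_pos hd ha
  have hu1 : u < 1 := (div_lt_one ha).mpr had
  have hw : 1 < w := (one_lt_div hα).mpr hαδ
  set ωf : ℕ → Matrix (Fin 2) (Fin 2) ℝ :=
    fun n => if (Stmt16Aux.SM u w n).2.2 then Mk else Ml with hωf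
  refine ⟨ωf, fun n => by by_cases h : (Stmt16Aux.SM u w n).2.2 <;> simp [hωf, h], ?_⟩
  intro V hV0 hV1
  rintro ⟨L, hL⟩
  set A : ℕ → ℝ :=
    fun n => ∏ i ∈ Finset.range n, (if (Stmt16Aux.SM u w i).2.2 then a else α) with hA
  set D : ℕ → ℝ :=
    fun n => ∏ i ∈ Finset.range n, (if (Stmt16Aux.SM u w i).2.2 then d else δ) with hD
  have hApos : ∀ n, 0 < A n := fun n =>
    Finset.prod_pos (fun i _ => by split_ifs <;> [exact ha; exact hα])
  have hDpos : ∀ n, 0 < D n := fun n =>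
    Finset.prod_pos (fun i _ => by split_ifs <;> [exact hd; exact (hα.trans hαδ)])
  have hAsucc : ∀ n, A (n+1) = A n * (if (Stmt16Aux.SM u w n).2.2 then a else α) :=
    fun n => Finset.prod_range_succ _ n
  have hDsucc : ∀ n, D (n+1) = D n * (if (Stmt16Aux.SM u w n).2.2 then d else δ) :=
    fun n => Finset.prod_range_succ _ n
  have hprod : ∀ n, ((List.range n).map ωf).prod = !![A n, 0; 0, D n] := by
    intro n
    induction n with
    | zero => simp [hA, hD, Matrix.one_fin_two]
    | succ n ih =>
      rw [List.range_succ, List.map_append, List.prod_append, ih]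
      simp only [List.map_cons, List.map_nil, List.prod_cons, List.prod_nil, mul_one]
      rw [hAsucc, hDsucc, hωf]
      by_cases h : (Stmt16Aux.SM u w n).2.2
      · simp only [h, if_true, hMk, Matrix.mul_fin_two]
        norm_num
      · simp only [h, if_false, hMl, Matrix.mul_fin_two]
        norm_num
  have hS : ∀ n, D n = (Stmt16Aux.SM u w n).1 * A n := by
    intro n
    induction n with
    | zero => simp [hA, hD, Stmt16Aux.SM]
    | succ n ih =>
      rw [hDsucc, ih, Stmt16Aux.S_succ, hAsucc]
      by_cases h : (Stmt16Aux.SM u w n).2.2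
      · simp only [h, if_true]
        have hua : u * a = d := by rw [hu]; exact div_mul_cancel₀ d ha.ne'
        rw [← hua]; ring
      · simp only [h, if_false]
        have hwa : w * α = δ := by rw [hwdef]; exact div_mul_cancel₀ δ hα.ne'
        simp only [Bool.false_eq_true, if_false]
        rw [← hwa]; ring
  have hmv : ∀ n, (((List.range n).map ωf).prod).mulVec V = ![A n * V 0, D n * V 1] := by
    intro n
    rw [hprod n]
    funext i
    fin_cases i <;> simp [Matrix.mulVec, dotProduct, Fin.sum_univ_two, Matrix.vecHead, Matrix.vecTail]
  have hsum : ∀ n, 0 < A n * V 0 + D n * V 1 := fun n => by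
    have := hApos n; have := hDpos n; positivity
  have h0 : Tendsto (fun n => (A n * V 0) / (A n * V 0 + D n * V 1)) atTop (nhds (L 0)) := by
    have hc := ((continuous_apply (0 : Fin 2)).tendsto L).comp hL
    refine hc.congr (fun n => ?_)
    simp only [Function.comp, hmv n, Pi.smul_apply, smul_eq_mul, Fin.sum_univ_two]
    simp only [Matrix.cons_val_zero, Matrix.cons_val_one, Matrix.head_cons]
    rw [inv_mul_eq_div]
  have freq1 : ∃ᶠ n in atTop,
      (fun n => (A n * V 0) / (A n * V 0 + D n * V 1)) n ∈ Set.Ici (3/4 : ℝ) := by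
    rw [Filter.frequently_atTop]
    intro N
    obtain ⟨n, hn, hsmall⟩ := Stmt16Aux.freq_small hu0 hu1 hw
      (show (0:ℝ) < V 0 / (3 * V 1) by positivity) N
    refine ⟨n, hn, ?_⟩
    have hy : 3 * (D n * V 1) ≤ A n * V 0 := by
      rw [hS n]
      have hAn := hApos n
      have h1 : (Stmt16Aux.SM u w n).1 * V 1 ≤ V 0 / 3 := by
        calc (Stmt16Aux.SM u w n).1 * V 1 ≤ (V 0 / (3 * V 1)) * V 1 := by
              exact mul_le_mul_of_nonneg_right hsmall hV1.le
          _ = V 0 / 3 := by field_simp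
      nlinarith
    simp only [Set.mem_Ici, le_div_iff₀ (hsum n)]
    linarith
  have freq2 : ∃ᶠ n in atTop,
      (fun n => (A n * V 0) / (A n * V 0 + D n * V 1)) n ∈ Set.Iic (1/4 : ℝ) := by
    rw [Filter.frequently_atTop]
    intro N
    obtain ⟨n, hn, hlarge⟩ := Stmt16Aux.freq_large hu0 hu1 hw (3 * V 0 / V 1) N
    refine ⟨n, hn, ?_⟩
    have hy : 3 * (A n * V 0) ≤ D n * V 1 := by
      rw [hS n]
      have hAn := hApos n
      have h1 : 3 * V 0 ≤ (Stmt16Aux.SM u w n).1 * V 1 := by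
        rw [div_le_iff₀ hV1] at hlarge
        linarith
      nlinarith
    simp only [Set.mem_Iic, div_le_iff₀ (hsum n)]
    linarith
  have c1 : (3/4 : ℝ) ≤ L 0 := by
    have := mem_closure_of_frequently_of_tendsto freq1 h0
    rwa [closure_Ici] at this
  have c2 : L 0 ≤ (1/4 : ℝ) := by
    have := mem_closure_of_frequently_of_tendsto freq2 h0
    rwa [closure_Iic] at this
  linarith
end

section
/- Let M_k = (a 0; 0 d) be diagonal with a, d > 0 and a ≠ d, M_{h''} = (0 β; γ 0) with β, γ > 0, and V = (v₁; 0) with v₁ > 0. Define ω by ω_{i_j} = h'' and ωₙ = k for n ∈ (i_j, i_{j+1}), for some increasing sequence 1 = i₁ < i₂ < ⋯. Then Y_{i_j} = M_{ω₁}⋯M_{ω_{i_j}} is antidiagonal for j odd and diagonal for j even, and consequently (Y_{i_j}V)₂/(Y_{i_j}V)₁ is alternately ∞ and 0, so the ratio sequence diverges. -/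
open Matrix Filter Topology

private def Dg (Y : Matrix (Fin 2) (Fin 2) ℝ) : Prop :=
  0 < Y 0 0 ∧ 0 < Y 1 1 ∧ Y 0 1 = 0 ∧ Y 1 0 = 0

private def Ad (Y : Matrix (Fin 2) (Fin 2) ℝ) : Prop :=
  0 < Y 0 1 ∧ 0 < Y 1 0 ∧ Y 0 0 = 0 ∧ Y 1 1 = 0

private lemma mul_entry (Y M : Matrix (Fin 2) (Fin 2) ℝ) (p q : Fin 2) :
    (Y * M) p q = Y p 0 * M 0 q + Y p 1 * M 1 q := by
  simp [Matrix.mul_apply, Fin.sum_univ_two]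

private lemma Dg_mul_diag {Y : Matrix (Fin 2) (Fin 2) ℝ} {a d : ℝ}
    (ha : 0 < a) (hd : 0 < d) (h : Dg Y) : Dg (Y * !![a,0;0,d]) := by
  obtain ⟨h1,h2,h3,h4⟩ := h
  refine ⟨?_,?_,?_,?_⟩ <;> rw [mul_entry] <;> simp [h3, h4]
  · exact mul_pos h1 ha
  · exact mul_pos h2 hd

private lemma Ad_mul_diag {Y : Matrix (Fin 2) (Fin 2) ℝ} {a d : ℝ}
    (ha : 0 < a) (hd : 0 < d) (h : Ad Y) : Ad (Y * !![a,0;0,d]) := by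
  obtain ⟨h1,h2,h3,h4⟩ := h
  refine ⟨?_,?_,?_,?_⟩ <;> rw [mul_entry] <;> simp [h3, h4]
  · exact mul_pos h1 hd
  · exact mul_pos h2 ha

private lemma Dg_mul_anti {Y : Matrix (Fin 2) (Fin 2) ℝ} {β γ : ℝ}
    (hβ : 0 < β) (hγ : 0 < γ) (h : Dg Y) : Ad (Y * !![0,β;γ,0]) := by
  obtain ⟨h1,h2,h3,h4⟩ := h
  refine ⟨?_,?_,?_,?_⟩ <;> rw [mul_entry] <;> simp [h3, h4]
  · exact mul_pos h1 hβ
  · exact mul_pos h2 hγ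

private lemma Ad_mul_anti {Y : Matrix (Fin 2) (Fin 2) ℝ} {β γ : ℝ}
    (hβ : 0 < β) (hγ : 0 < γ) (h : Ad Y) : Dg (Y * !![0,β;γ,0]) := by
  obtain ⟨h1,h2,h3,h4⟩ := h
  refine ⟨?_,?_,?_,?_⟩ <;> rw [mul_entry] <;> simp [h3, h4]
  · exact mul_pos h1 hγ
  · exact mul_pos h2 hβ

open Matrix Filter Topology


/-- With `M_k` diagonal (`a, d > 0`, `a ≠ d`), `M_{h''}` antidiagonal (`β, γ > 0`),
`V = (v₁; 0)` with `v₁ > 0`, and `ω` placing `M_{h''}` exactly at positions `i₁ = 1 < i₂ < ⋯`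
and `M_k` elsewhere, the product `Y_{i_j}` is antidiagonal for odd `j` and diagonal for even
`j`, the ratio `(Y_{i_j}V)₂/(Y_{i_j}V)₁` is alternately `∞` and `0`, and the normalized
sequence `YₙV/‖YₙV‖` diverges. -/
theorem stmt17 (a d β γ : ℝ) (ha : 0 < a) (hd : 0 < d) (had : a ≠ d) (hβ : 0 < β) (hγ : 0 < γ)
    (Mk Mh : Matrix (Fin 2) (Fin 2) ℝ) (hMk : Mk = !![a, 0; 0, d]) (hMh : Mh = !![0, β; γ, 0])
    (v₁ : ℝ) (hv₁ : 0 < v₁) (V : Fin 2 → ℝ) (hV : V = ![v₁, 0])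
    (i : ℕ → ℕ) (hi1 : i 1 = 1) (himono : ∀ j, 1 ≤ j → i j < i (j + 1))
    (ω : ℕ → Matrix (Fin 2) (Fin 2) ℝ)
    (hωh : ∀ j, 1 ≤ j → ω (i j) = Mh)
    (hωk : ∀ n, 1 ≤ n → (∀ j, 1 ≤ j → n ≠ i j) → ω n = Mk)
    (Y : ℕ → Matrix (Fin 2) (Fin 2) ℝ)
    (hY : ∀ n, Y n = ((List.range n).map (fun m => ω (m + 1))).prod) :
    (∀ j, 1 ≤ j → Odd j →
      Y (i j) 0 0 = 0 ∧ Y (i j) 1 1 = 0 ∧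
      (Y (i j)).mulVec V 0 = 0 ∧ 0 < (Y (i j)).mulVec V 1) ∧
    (∀ j, 1 ≤ j → Even j →
      Y (i j) 0 1 = 0 ∧ Y (i j) 1 0 = 0 ∧
      (Y (i j)).mulVec V 1 = 0 ∧ 0 < (Y (i j)).mulVec V 0) ∧
    ¬ ∃ L : Fin 2 → ℝ,
      Tendsto (fun n => (∑ k, (Y n).mulVec V k)⁻¹ • (Y n).mulVec V) atTop (nhds L) := by
  -- recurrence
  have hstep : ∀ n, Y (n + 1) = Y n * ω (n + 1) := by
    intro n
    rw [hY, hY, List.range_succ]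
    simp
  -- monotonicity facts
  have hmono : ∀ j l, 1 ≤ j → j < l → i j < i l := by
    intro j l hj hl
    induction l with
    | zero => omega
    | succ l ih =>
      rcases Nat.lt_succ_iff_lt_or_eq.mp hl with h | h
      · exact lt_trans (ih h) (himono l (by omega))
      · subst h; exact himono j hj
  have hmono' : ∀ j l, 1 ≤ j → j ≤ l → i j ≤ i l := by
    intro j l hj hl
    rcases eq_or_lt_of_le hl with h | h
    · subst h; exact le_rfl
    · exact le_of_lt (hmono j l hj h)
  have hge : ∀ j, 1 ≤ j → j ≤ i j := by
    intro j hj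
    induction j with
    | zero => omega
    | succ j ih =>
      rcases Nat.eq_or_lt_of_le hj with h | h
      · have hj0 : j = 0 := by omega
        subst hj0
        simp [hi1]
      · have := himono j (by omega)
        have := ih (by omega)
        omega
  -- between consecutive antidiagonal positions, ω is Mk
  have hbetween : ∀ j n, 1 ≤ j → i j < n → n < i (j + 1) → ω n = Mk := by
    intro j n hj h1 h2
    refine hωk n (by have := hge j hj; omega) ?_
    intro j' hj' hn
    subst hn
    rcases lt_trichotomy j' j with h | h | h
    · exact absurd (hmono j' j hj' h) (by omega)
    · subst h; omega
    · have : j + 1 ≤ j' := h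
      have := hmono' (j+1) j' (by omega) this
      omega
  -- the main parity invariant
  have key : ∀ j, 1 ≤ j → (Odd j → Ad (Y (i j))) ∧ (Even j → Dg (Y (i j))) := by
    intro j hj
    induction j, hj using Nat.le_induction with
    | base =>
      have hY1 : Y 1 = Mh := by
        rw [hstep 0, hY 0]
        simp
        rw [← hi1, hωh 1 le_rfl]
      rw [hi1, hY1, hMh]
      constructor
      · intro _
        exact ⟨by simpa using hβ, by simpa using hγ, by simp, by simp⟩
      · intro h; exact absurd h (by decide)
    | succ j hj ih =>
      -- invariant propagates along the diagonal stretch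
      have inner : ∀ t, i j + t < i (j + 1) →
          (Ad (Y (i j)) → Ad (Y (i j + t))) ∧ (Dg (Y (i j)) → Dg (Y (i j + t))) := by
        intro t
        induction t with
        | zero => intro _; exact ⟨id, id⟩
        | succ t iht =>
          intro ht
          have ht' : i j + t < i (j + 1) := by omega
          have hω : ω (i j + t + 1) = Mk := hbetween j (i j + t + 1) hj (by omega) (by omega)
          have hYt := hstep (i j + t)
          rw [hω, hMk] at hYt
          constructor
          · intro hAd
            rw [show i j + (t+1) = i j + t + 1 by ring, hYt]
            exact Ad_mul_diag ha hd ((iht ht').1 hAd)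
          · intro hDg
            rw [show i j + (t+1) = i j + t + 1 by ring, hYt]
            exact Dg_mul_diag ha hd ((iht ht').2 hDg)
      have hlt := himono j hj
      have hpred : i (j + 1) = (i j + (i (j+1) - 1 - i j)) + 1 := by omega
      have hωend : ω (i (j + 1)) = Mh := hωh (j+1) (by omega)
      have hYend : Y (i (j+1)) = Y (i j + (i (j+1) - 1 - i j)) * Mh := by
        rw [hpred, hstep, ← hpred, hωend]
      have hinner := inner (i (j+1) - 1 - i j) (by omega)
      constructor
      · intro hodd
        have hevenj : Even j := Nat.not_odd_iff_even.mp (Nat.odd_add_one.mp hodd)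
        have := hinner.2 (ih.2 hevenj)
        rw [hYend, hMh]
        exact Dg_mul_anti hβ hγ this
      · intro heven
        have hoddj : Odd j := Nat.not_even_iff_odd.mp (Nat.even_add_one.mp heven)
        have := hinner.1 (ih.1 hoddj)
        rw [hYend, hMh]
        exact Ad_mul_anti hβ hγ this
  -- mulVec computations
  have hmv : ∀ n, (Y n).mulVec V 0 = Y n 0 0 * v₁ ∧ (Y n).mulVec V 1 = Y n 1 0 * v₁ := by
    intro n
    constructor <;> simp [Matrix.mulVec, dotProduct, Fin.sum_univ_two, hV]
  have part1 : ∀ j, 1 ≤ j → Odd j →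
      Y (i j) 0 0 = 0 ∧ Y (i j) 1 1 = 0 ∧
      (Y (i j)).mulVec V 0 = 0 ∧ 0 < (Y (i j)).mulVec V 1 := by
    intro j hj hodd
    obtain ⟨h1, h2, h3, h4⟩ := (key j hj).1 hodd
    obtain ⟨m0, m1⟩ := hmv (i j)
    exact ⟨h3, h4, by rw [m0, h3, zero_mul], by rw [m1]; exact mul_pos h2 hv₁⟩
  have part2 : ∀ j, 1 ≤ j → Even j →
      Y (i j) 0 1 = 0 ∧ Y (i j) 1 0 = 0 ∧
      (Y (i j)).mulVec V 1 = 0 ∧ 0 < (Y (i j)).mulVec V 0 := by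
    intro j hj heven
    obtain ⟨h1, h2, h3, h4⟩ := (key j hj).2 heven
    obtain ⟨m0, m1⟩ := hmv (i j)
    exact ⟨h3, h4, by rw [m1, h4, zero_mul], by rw [m0]; exact mul_pos h1 hv₁⟩
  refine ⟨part1, part2, ?_⟩
  rintro ⟨L, hL⟩
  set s : ℕ → Fin 2 → ℝ := fun n => (∑ k, (Y n).mulVec V k)⁻¹ • (Y n).mulVec V with hs
  have hsum : ∀ n, ∑ k, (Y n).mulVec V k = (Y n).mulVec V 0 + (Y n).mulVec V 1 :=
    fun n => Fin.sum_univ_two _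
  -- value at odd positions
  have sodd : ∀ j, 1 ≤ j → Odd j → s (i j) = ![0, 1] := by
    intro j hj hodd
    obtain ⟨_, _, h3, h4⟩ := part1 j hj hodd
    have hsum' : ∑ k, (Y (i j)).mulVec V k = (Y (i j)).mulVec V 1 := by
      rw [hsum, h3, zero_add]
    funext k
    fin_cases k <;> simp [hs, hsum', h3, Pi.smul_apply, smul_eq_mul]
    all_goals (simp only [Matrix.mulVec, dotProduct, Fin.sum_univ_two] at h3 h4; simp [h3, ne_of_gt h4])
  have seven : ∀ j, 1 ≤ j → Even j → s (i j) = ![1, 0] := by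
    intro j hj heven
    obtain ⟨_, _, h3, h4⟩ := part2 j hj heven
    have hsum' : ∑ k, (Y (i j)).mulVec V k = (Y (i j)).mulVec V 0 := by
      rw [hsum, h3, add_zero]
    funext k
    fin_cases k <;> simp [hs, hsum', h3, Pi.smul_apply, smul_eq_mul]
    all_goals (simp only [Matrix.mulVec, dotProduct, Fin.sum_univ_two] at h3 h4; simp [h3, ne_of_gt h4])
  have htend1 : Tendsto (fun n => i (2 * n + 1)) atTop atTop := by
    apply tendsto_atTop_mono (fun n => hge (2 * n + 1) (by omega))
    exact tendsto_atTop_mono (fun n => by omega : ∀ n : ℕ, n ≤ 2 * n + 1) tendsto_id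
  have htend2 : Tendsto (fun n => i (2 * n + 2)) atTop atTop := by
    apply tendsto_atTop_mono (fun n => hge (2 * n + 2) (by omega))
    exact tendsto_atTop_mono (fun n => by omega : ∀ n : ℕ, n ≤ 2 * n + 2) tendsto_id
  have hL1 : L = ![0, 1] := by
    have : Tendsto (fun n => s (i (2 * n + 1))) atTop (nhds L) := hL.comp htend1
    have heq : (fun n => s (i (2 * n + 1))) = fun _ => ![0, 1] := by
      funext n; exact sodd (2*n+1) (by omega) ⟨n, by ring⟩
    rw [heq] at this
    exact tendsto_nhds_unique this tendsto_const_nhds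
  have hL2 : L = ![1, 0] := by
    have : Tendsto (fun n => s (i (2 * n + 2))) atTop (nhds L) := hL.comp htend2
    have heq : (fun n => s (i (2 * n + 2))) = fun _ => ![1, 0] := by
      funext n; exact seven (2*n+2) (by omega) ⟨n + 1, by ring⟩
    rw [heq] at this
    exact tendsto_nhds_unique this tendsto_const_nhds
  have heqL : (![0,1] : Fin 2 → ℝ) = ![1,0] := hL1.symm.trans hL2
  have h01 := congrFun heqL 0
  simp at h01
end

section
/- Let M₀, ..., M_{d−1} be nonnegative 2×2 matrices such that every invertible Mₖ = (a b; c d) satisfies a > 0, and additionally a ≥ d whenever b = c = 0 (condition (ii)). Suppose all Mₖ are diagonal. Then for every nonnegative vector V and every ω ∈ {0,...,d−1}^ℕ with Yₙ V ≠ 0 for all n (Yₙ = M_{ω₁}⋯M_{ωₙ}), the sequence Yₙ V / ‖Yₙ V‖ converges. -/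
open Matrix Filter Topology

/-- If all matrices `M₀, …, M_{N−1}` are nonnegative and diagonal, and every invertible one
`(a b; c d)` satisfies `a > 0` and `a ≥ d` when `b = c = 0` (condition (ii)), then for every
nonnegative `V` and every `ω` with `YₙV ≠ 0` for all `n`, the sequence `YₙV/‖YₙV‖` (sum norm)
converges. -/
theorem stmt18 (N : ℕ) (M : Fin N → Matrix (Fin 2) (Fin 2) ℝ)
    (hpos : ∀ k i j, 0 ≤ M k i j)
    (hii : ∀ k, (M k).det ≠ 0 →
      0 < M k 0 0 ∧ (M k 0 1 = 0 ∧ M k 1 0 = 0 → M k 1 1 ≤ M k 0 0))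
    (hdiag : ∀ k, M k 0 1 = 0 ∧ M k 1 0 = 0)
    (V : Fin 2 → ℝ) (hV : ∀ i, 0 ≤ V i)
    (ω : ℕ → Fin N)
    (Y : ℕ → Matrix (Fin 2) (Fin 2) ℝ)
    (hY : ∀ n, Y n = ((List.range n).map (fun m => M (ω (m + 1)))).prod)
    (hYV : ∀ n, (Y n).mulVec V ≠ 0) :
    ∃ L : Fin 2 → ℝ,
      Tendsto (fun n => (∑ i, (Y n).mulVec V i)⁻¹ • (Y n).mulVec V) atTop (nhds L) := by
  have hY0 : Y 0 = 1 := by simp [hY]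
  have hstep : ∀ n, Y (n + 1) = Y n * M (ω (n + 1)) := by
    intro n
    rw [hY, hY, List.range_succ, List.map_append, List.prod_append]
    simp
  have hdiagY : ∀ n, Y n 0 1 = 0 ∧ Y n 1 0 = 0 := by
    intro n
    induction n with
    | zero => rw [hY0]; constructor <;> simp [Matrix.one_apply]
    | succ n ih =>
      obtain ⟨h1, h2⟩ := hdiag (ω (n + 1))
      rw [hstep n]
      constructor <;>
        simp [Matrix.mul_apply, Fin.sum_univ_two, h1, h2, ih.1, ih.2]
  have hA : ∀ n, Y (n + 1) 0 0 = Y n 0 0 * M (ω (n + 1)) 0 0 := by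
    intro n
    rw [hstep n]
    simp [Matrix.mul_apply, Fin.sum_univ_two, (hdiag (ω (n + 1))).2, (hdiagY n).1]
  have hD : ∀ n, Y (n + 1) 1 1 = Y n 1 1 * M (ω (n + 1)) 1 1 := by
    intro n
    rw [hstep n]
    simp [Matrix.mul_apply, Fin.sum_univ_two, (hdiag (ω (n + 1))).1, (hdiagY n).2]
  set x : ℕ → ℝ := fun n => (Y n).mulVec V 0 with hxdef
  set y : ℕ → ℝ := fun n => (Y n).mulVec V 1 with hydef
  have hxval : ∀ n, x n = Y n 0 0 * V 0 := by
    intro n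
    simp [hxdef, Matrix.mulVec, dotProduct, Fin.sum_univ_two, (hdiagY n).1]
  have hyval : ∀ n, y n = Y n 1 1 * V 1 := by
    intro n
    simp [hydef, Matrix.mulVec, dotProduct, Fin.sum_univ_two, (hdiagY n).2]
  have hxstep : ∀ n, x (n + 1) = M (ω (n + 1)) 0 0 * x n := by
    intro n; rw [hxval, hxval, hA]; ring
  have hystep : ∀ n, y (n + 1) = M (ω (n + 1)) 1 1 * y n := by
    intro n; rw [hyval, hyval, hD]; ring
  have hYnn : ∀ n, 0 ≤ Y n 0 0 ∧ 0 ≤ Y n 1 1 := by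
    intro n
    induction n with
    | zero => rw [hY0]; norm_num
    | succ n ih =>
      rw [hA, hD]
      exact ⟨mul_nonneg ih.1 (hpos _ 0 0), mul_nonneg ih.2 (hpos _ 1 1)⟩
  have hxnn : ∀ n, 0 ≤ x n := fun n => by
    rw [hxval]; exact mul_nonneg (hYnn n).1 (hV 0)
  have hynn : ∀ n, 0 ≤ y n := fun n => by
    rw [hyval]; exact mul_nonneg (hYnn n).2 (hV 1)
  have hspos : ∀ n, 0 < x n + y n := by
    intro n
    rcases (hxnn n).lt_or_eq with h | h
    · linarith [hynn n]
    · rcases (hynn n).lt_or_eq with h' | h'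
      · linarith
      · exfalso
        apply hYV n
        funext i
        fin_cases i
        · exact h.symm
        · exact h'.symm
  have hsum : ∀ n, ∑ i, (Y n).mulVec V i = x n + y n := by
    intro n
    simp [Fin.sum_univ_two, hxdef, hydef]
  -- main scalar convergence
  have main : ∃ c : ℝ, Tendsto (fun n => x n / (x n + y n)) atTop (nhds c) := by
    by_cases hzero : ∃ n₀, x n₀ = 0
    · obtain ⟨n₀, h0⟩ := hzero
      have hxz : ∀ n, n₀ ≤ n → x n = 0 := by
        intro n hn
        induction n, hn using Nat.le_induction with
        | base => exact h0
        | succ n hn ih => rw [hxstep, ih, mul_zero]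
      refine ⟨0, ?_⟩
      apply Tendsto.congr' _ tendsto_const_nhds
      filter_upwards [eventually_ge_atTop n₀] with n hn
      rw [hxz n hn, zero_div]
    · push_neg at hzero
      have hxpos : ∀ n, 0 < x n := fun n => lt_of_le_of_ne (hxnn n) (Ne.symm (hzero n))
      set ρ : ℕ → ℝ := fun n => y n / x n with hρdef
      have hρnn : ∀ n, 0 ≤ ρ n := fun n => div_nonneg (hynn n) (hxnn n)
      have hanti : ∀ n, ρ (n + 1) ≤ ρ n := by
        intro n
        set k := ω (n + 1)
        have ha0 : 0 ≤ M k 0 0 := hpos k 0 0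
        have ha : 0 < M k 0 0 := by
          rcases ha0.lt_or_eq with h | h
          · exact h
          · exfalso
            have := hxstep n
            rw [← h, zero_mul] at this
            exact (hxpos (n + 1)).ne' this
        have hd0 : 0 ≤ M k 1 1 := hpos k 1 1
        rcases hd0.lt_or_eq with hd | hd
        · have hdet : (M k).det ≠ 0 := by
            rw [Matrix.det_fin_two, (hdiag k).1, (hdiag k).2]
            simpa using (mul_pos ha hd).ne'
          have hda : M k 1 1 ≤ M k 0 0 := (hii k hdet).2 (hdiag k)
          have : ρ (n + 1) = (M k 1 1 / M k 0 0) * ρ n := by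
            rw [hρdef]
            simp only [hxstep n, hystep n]
            rw [show ω (n + 1) = k from rfl]
            have := (hxpos n).ne'
            field_simp
            try ring
          rw [this]
          calc (M k 1 1 / M k 0 0) * ρ n ≤ 1 * ρ n := by
                apply mul_le_mul_of_nonneg_right _ (hρnn n)
                rw [div_le_one ha]
                exact hda
            _ = ρ n := one_mul _
        · have : ρ (n + 1) = 0 := by
            rw [hρdef]
            simp [hystep n, ← hd]
            exact Or.inl (Or.inl hd.symm)
          rw [this]
          exact hρnn n
      have hAnti : Antitone ρ := antitone_nat_of_succ_le hanti
      have hBdd : BddBelow (Set.range ρ) := ⟨0, by rintro r ⟨n, rfl⟩; exact hρnn n⟩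
      have hρtend : Tendsto ρ atTop (nhds (⨅ n, ρ n)) := tendsto_atTop_ciInf hAnti hBdd
      set ℓ : ℝ := ⨅ n, ρ n with hℓdef
      have hℓnn : 0 ≤ ℓ := le_ciInf hρnn
      refine ⟨(1 + ℓ)⁻¹, ?_⟩
      have h1 : Tendsto (fun n => (1 + ρ n)⁻¹) atTop (nhds (1 + ℓ)⁻¹) :=
        ((tendsto_const_nhds.add hρtend).inv₀ (by linarith))
      apply h1.congr
      intro n
      have hx := (hxpos n).ne'
      have hs := (hspos n).ne'
      rw [hρdef]
      field_simp
  obtain ⟨c, hc⟩ := main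
  have hc2 : Tendsto (fun n => y n / (x n + y n)) atTop (nhds (1 - c)) := by
    apply (tendsto_const_nhds.sub hc).congr
    intro n
    have hs := (hspos n).ne'
    field_simp
    try ring
  have e0 : ∀ n, (Y n).mulVec V 0 = x n := fun n => rfl
  have e1 : ∀ n, (Y n).mulVec V 1 = y n := fun n => rfl
  refine ⟨![c, 1 - c], ?_⟩
  rw [tendsto_pi_nhds]
  intro i
  fin_cases i
  · simpa [div_eq_inv_mul, hxdef, hydef] using hc
  · simpa [div_eq_inv_mul, hxdef, hydef] using hc2
end
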